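/- Let k > 0 and 2 − 1/(k+1) < p < 2 + 1/k. Suppose there is a constant A such that γ_n·|sin x|^k·|E_n^k(ix)| ≤ A for all x ∈ [−π,π] and n ∈ ℤ. Then for every f ∈ L^p([−π,π], |sin x|^{2k} dx), the Fourier–Heckman–Opdam coefficients a_n = γ_n² ∫_{−π}^{π} f(x) E_n^k(−ix) |sin x|^{2k} dx satisfy |a_n|/γ_n ≤ C·‖f‖_{L^p(dm_k)} for a constant C independent of n. -/

import Mathlib

open MeasureTheory Real Set ENNReal

lemma sin_rpow_bound {a : ℝ} (ha : a < 0) {y : ℝ} (hy : y ∈ Set.Icc 0 Real.pi) :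
    Real.sin y ^ a ≤ (2 / Real.pi) ^ a * (y ^ a + (Real.pi - y) ^ a) := by
  obtain ⟨hy0, hyπ⟩ := hy
  have hπ := Real.pi_pos
  have h2π : (0:ℝ) < 2 / Real.pi := by positivity
  have hRHS : 0 ≤ (2 / Real.pi) ^ a * (y ^ a + (Real.pi - y) ^ a) := by
    have := Real.rpow_nonneg hy0 a
    have := Real.rpow_nonneg (by linarith : (0:ℝ) ≤ Real.pi - y) a
    have := Real.rpow_nonneg h2π.le a
    nlinarith
  rcases eq_or_lt_of_le hy0 with h0 | h0
  · have hz : Real.sin y ^ a = 0 := by rw [← h0, Real.sin_zero, Real.zero_rpow ha.ne]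
    rw [hz]; exact hRHS
  rcases eq_or_lt_of_le hyπ with hπ' | hπ'
  · have hz : Real.sin y ^ a = 0 := by rw [hπ', Real.sin_pi, Real.zero_rpow ha.ne]
    rw [hz]; exact hRHS
  have key : ∀ z : ℝ, 0 < z → z ≤ Real.pi / 2 → z ^ a ≤ y ^ a + (Real.pi - y) ^ a →
      Real.sin z ^ a ≤ (2 / Real.pi) ^ a * (y ^ a + (Real.pi - y) ^ a) := by
    intro z hz hz2 hcase
    have hms : 2 / Real.pi * z ≤ Real.sin z := Real.mul_le_sin hz.le hz2
    have hmz : 0 < 2 / Real.pi * z := by positivity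
    have h1 : Real.sin z ^ a ≤ (2 / Real.pi * z) ^ a :=
      Real.rpow_le_rpow_of_nonpos hmz hms ha.le
    rw [Real.mul_rpow h2π.le hz.le] at h1
    refine h1.trans ?_
    have h2a := Real.rpow_nonneg h2π.le a
    nlinarith [Real.rpow_nonneg hz.le a]
  rcases le_or_gt y (Real.pi / 2) with hhalf | hhalf
  · exact key y h0 hhalf
      (le_add_of_nonneg_right (Real.rpow_nonneg (by linarith) a))
  · have := key (Real.pi - y) (by linarith) (by linarith)
      (le_add_of_nonneg_left (Real.rpow_nonneg hy0 a))
    rwa [Real.sin_pi_sub] at this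

lemma lint_le_top_of_integrableOn {g : ℝ → ℝ} {s : Set ℝ}
    (hg : MeasureTheory.IntegrableOn g s MeasureTheory.volume) :
    ∫⁻ x in s, ENNReal.ofReal (g x) ∂MeasureTheory.volume < ⊤ := by
  refine lt_of_le_of_lt (MeasureTheory.lintegral_mono fun x => ?_) hg.2
  rw [Real.enorm_eq_ofReal_abs]
  exact ENNReal.ofReal_le_ofReal (le_abs_self _)

lemma lint_sin_rpow_lt_top {a : ℝ} (ha : -1 < a) :
    ∫⁻ x in Set.Icc (-Real.pi) Real.pi,
      ENNReal.ofReal (|Real.sin x| ^ a) ∂MeasureTheory.volume < ⊤ := by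
  have hπ := Real.pi_pos
  rcases le_or_gt 0 a with ha0 | ha0
  · calc ∫⁻ x in Set.Icc (-Real.pi) Real.pi, ENNReal.ofReal (|Real.sin x| ^ a) ∂volume
        ≤ ∫⁻ _x in Set.Icc (-Real.pi) Real.pi, 1 ∂volume := by
          refine lintegral_mono fun x => ?_
          exact ENNReal.ofReal_le_one.2 (Real.rpow_le_one (abs_nonneg _) (Real.abs_sin_le_one x) ha0)
      _ < ⊤ := by
          rw [MeasureTheory.lintegral_one, MeasureTheory.Measure.restrict_apply_univ,
            Real.volume_Icc]
          exact ENNReal.ofReal_lt_top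
  · have hsplit : Set.Icc (-Real.pi) Real.pi
        = Set.Icc (-Real.pi) 0 ∪ Set.Icc 0 Real.pi :=
      (Set.Icc_union_Icc_eq_Icc (by linarith) (by linarith)).symm
    rw [hsplit]
    refine lt_of_le_of_lt (MeasureTheory.lintegral_union_le _ _ _) ?_
    have hadd : ∀ x y : ℝ≥0∞, x < ⊤ → y < ⊤ → x + y < ⊤ := fun x y hx hy =>
      ENNReal.add_lt_top.2 ⟨hx, hy⟩
    refine hadd _ _ ?_ ?_
    · -- on [-π, 0]
      have hmeas : Measurable fun x : ℝ =>
          ENNReal.ofReal ((2 / Real.pi) ^ a * ((-x) ^ a + (Real.pi + x) ^ a)) := by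
        refine Measurable.ennreal_ofReal ?_
        exact (((measurable_id.neg).pow measurable_const).add
          ((measurable_const.add measurable_id).pow measurable_const)).const_mul _
      refine lt_of_le_of_lt (MeasureTheory.setLIntegral_mono hmeas fun x hx => ?_) ?_
      · refine ENNReal.ofReal_le_ofReal ?_
        have hx0 : -x ∈ Set.Icc 0 Real.pi := ⟨by linarith [hx.2], by linarith [hx.1]⟩
        have habs : |Real.sin x| = Real.sin (-x) := by
          rw [Real.sin_neg, abs_of_nonpos (Real.sin_nonpos_of_nonpos_of_neg_pi_le hx.2 hx.1)]
        rw [habs]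
        simpa [sub_neg_eq_add, add_comm] using sin_rpow_bound ha0 hx0
      · refine lint_le_top_of_integrableOn ?_
        have i1 : IntervalIntegrable (fun x : ℝ => (-x) ^ a) volume (-Real.pi) 0 := by
          have h := ((IntervalIntegrable.iff_comp_neg).mp
            (intervalIntegral.intervalIntegrable_rpow' (a := 0) (b := Real.pi) ha)).symm
          simpa using h
        have i2 : IntervalIntegrable (fun x : ℝ => (Real.pi + x) ^ a) volume (-Real.pi) 0 := by
          have h := (intervalIntegral.intervalIntegrable_rpow' (a := 0) (b := Real.pi) ha).comp_add_left Real.pi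
          simpa using h
        exact (intervalIntegrable_iff_integrableOn_Icc_of_le (by linarith)).1
          ((i1.add i2).const_mul _)
    · -- on [0, π]
      have hmeas : Measurable fun x : ℝ =>
          ENNReal.ofReal ((2 / Real.pi) ^ a * (x ^ a + (Real.pi - x) ^ a)) := by
        refine Measurable.ennreal_ofReal ?_
        exact ((measurable_id.pow measurable_const).add
          ((measurable_const.sub measurable_id).pow measurable_const)).const_mul _
      refine lt_of_le_of_lt (MeasureTheory.setLIntegral_mono hmeas fun x hx => ?_) ?_
      · refine ENNReal.ofReal_le_ofReal ?_
        have habs : |Real.sin x| = Real.sin x :=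
          abs_of_nonneg (Real.sin_nonneg_of_nonneg_of_le_pi hx.1 hx.2)
        rw [habs]
        exact sin_rpow_bound ha0 hx
      · refine lint_le_top_of_integrableOn ?_
        have i1 : IntervalIntegrable (fun x : ℝ => x ^ a) volume 0 Real.pi :=
          intervalIntegral.intervalIntegrable_rpow' ha
        have i2 : IntervalIntegrable (fun x : ℝ => (Real.pi - x) ^ a) volume 0 Real.pi := by
          have h := ((intervalIntegral.intervalIntegrable_rpow' (a := 0) (b := Real.pi) ha).comp_sub_left
            Real.pi).symm
          simpa using h
        exact (intervalIntegrable_iff_integrableOn_Icc_of_le (by linarith)).1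
          ((i1.add i2).const_mul _)


/-- The measure `dm_k(x) = |sin x|^{2k} dx` on `[-π, π]`. -/
noncomputable def dmk (k : ℝ) : MeasureTheory.Measure ℝ :=
  (MeasureTheory.volume.restrict (Set.Icc (-Real.pi) Real.pi)).withDensity
    (fun x => ENNReal.ofReal (|Real.sin x| ^ (2 * k)))

theorem stmt16 (k p : ℝ) (hk : 0 < k) (hp1 : 2 - 1 / (k + 1) < p) (hp2 : p < 2 + 1 / k)
    (E : ℤ → ℂ → ℂ) (γ : ℤ → ℝ) (hγpos : ∀ n : ℤ, 0 < γ n) (A : ℝ)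
    (hbound : ∀ x ∈ Set.Icc (-Real.pi) Real.pi, ∀ n : ℤ,
      γ n * |Real.sin x| ^ k * ‖E n (Complex.I * x)‖ ≤ A) :
    ∃ C : ℝ, ∀ f : ℝ → ℂ, MeasureTheory.MemLp f (ENNReal.ofReal p) (dmk k) →
      ∀ n : ℤ,
        ‖((γ n ^ 2 : ℝ) : ℂ) * ∫ x in (-Real.pi)..Real.pi,
            f x * E n (-(Complex.I * x)) * ((|Real.sin x| ^ (2 * k) : ℝ) : ℂ)‖ / γ n
          ≤ C * (MeasureTheory.eLpNorm f (ENNReal.ofReal p) (dmk k)).toReal := by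
  have hπ := Real.pi_pos
  have hk1 : (0:ℝ) < k + 1 := by linarith
  have hp_one : 1 < p := by
    have h1 : 1 / (k+1) ≤ 1 := by rw [div_le_one hk1]; linarith
    linarith
  have hp_pos : (0:ℝ) < p := by linarith
  have hp1' : (0:ℝ) < p - 1 := by linarith
  set q : ℝ := p / (p - 1) with hq_def
  have hpq : p.HolderConjugate q := (Real.holderConjugate_iff_eq_conjExponent hp_one).2 rfl
  have hq_pos : 0 < q := by positivity
  have hkq : k * q < 2 * k + 1 := by
    have h2 : (2 - 1/(k+1)) * (k+1) = 2*k + 1 := by field_simp; ring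
    have h1 : 2*k+1 < p * (k+1) := by rw [← h2]; exact mul_lt_mul_of_pos_right hp1 hk1
    have h3 : q < 2 + 1/k := by
      rw [hq_def, div_lt_iff₀ hp1']
      have hik : 1/k * k = 1 := one_div_mul_cancel hk.ne'
      nlinarith
    have h4 : k * q < k * (2 + 1/k) := mul_lt_mul_of_pos_left h3 hk
    have h5 : k * (2 + 1/k) = 2*k + 1 := by field_simp
    linarith
  have ha : -1 < 2*k - k*q := by linarith
  have hA : 0 ≤ A := by
    refine le_trans ?_ (hbound 0 ⟨by linarith, by linarith⟩ 0)
    exact mul_nonneg (mul_nonneg (hγpos 0).le (Real.rpow_nonneg (abs_nonneg _) k))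
      (norm_nonneg _)
  set μ := dmk k with hμ
  have hsin_meas : Measurable fun x : ℝ => ENNReal.ofReal (|Real.sin x| ^ (2*k)) :=
    (Real.measurable_sin.abs.pow measurable_const).ennreal_ofReal
  have hwd : ∀ g : ℝ → ℝ≥0∞, ∫⁻ x, g x ∂μ
      = ∫⁻ x in Set.Icc (-Real.pi) Real.pi,
          ENNReal.ofReal (|Real.sin x| ^ (2*k)) * g x ∂volume := by
    intro g
    rw [hμ, dmk, MeasureTheory.lintegral_withDensity_eq_lintegral_mul_non_measurable _
      hsin_meas (MeasureTheory.ae_of_all _ fun x => ENNReal.ofReal_lt_top)]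
    rfl
  set w : ℝ → ℝ≥0∞ := fun x => ENNReal.ofReal (|Real.sin x| ^ (-k)) with hw
  have hw_meas : Measurable w :=
    (Real.measurable_sin.abs.pow measurable_const).ennreal_ofReal
  set B : ℝ≥0∞ := (∫⁻ x, w x ^ q ∂μ) ^ (1/q) with hB
  have hB_lt : B < ⊤ := by
    have hbase : ∫⁻ x, w x ^ q ∂μ < ⊤ := by
      have h1 : ∀ x : ℝ, w x ^ q = ENNReal.ofReal (|Real.sin x| ^ (-k * q)) := by
        intro x
        simp only [hw]
        rw [ENNReal.ofReal_rpow_of_nonneg (Real.rpow_nonneg (abs_nonneg _) _) hq_pos.le,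
          ← Real.rpow_mul (abs_nonneg _)]
      calc ∫⁻ x, w x ^ q ∂μ
          = ∫⁻ x in Set.Icc (-Real.pi) Real.pi,
              ENNReal.ofReal (|Real.sin x| ^ (2*k)) *
                ENNReal.ofReal (|Real.sin x| ^ (-k * q)) ∂volume := by
            rw [hwd (fun x => w x ^ q)]; simp only [h1]
        _ ≤ ∫⁻ x in Set.Icc (-Real.pi) Real.pi,
              ENNReal.ofReal (|Real.sin x| ^ (2*k - k*q)) ∂volume := by
            refine MeasureTheory.setLIntegral_mono
              ((Real.measurable_sin.abs.pow measurable_const).ennreal_ofReal) fun x _ => ?_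
            rw [← ENNReal.ofReal_mul (Real.rpow_nonneg (abs_nonneg _) _)]
            refine ENNReal.ofReal_le_ofReal ?_
            rcases eq_or_ne (Real.sin x) 0 with hs | hs
            · rw [hs]
              simp only [abs_zero]
              rw [Real.zero_rpow (by positivity : (2:ℝ)*k ≠ 0), zero_mul]
              exact Real.rpow_nonneg le_rfl _
            · rw [← Real.rpow_add (abs_pos.2 hs)]
              apply le_of_eq; congr 1; ring
        _ < ⊤ := lint_sin_rpow_lt_top ha
    exact ENNReal.rpow_lt_top_of_nonneg (by positivity) hbase.ne
  refine ⟨A * B.toReal, fun f hf n => ?_⟩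
  have hγ := hγpos n
  set Np := MeasureTheory.eLpNorm f (ENNReal.ofReal p) μ with hNp
  have hNp_lt : Np < ⊤ := hf.2
  -- the integrand
  set F : ℝ → ℂ := fun x => f x * E n (-(Complex.I * x)) * ((|Real.sin x| ^ (2 * k) : ℝ) : ℂ)
    with hF
  -- pointwise bound
  have hptwise : ∀ x ∈ Set.Icc (-Real.pi) Real.pi,
      ENNReal.ofReal ‖F x‖ ≤ ENNReal.ofReal (A / γ n) *
        (ENNReal.ofReal (|Real.sin x| ^ (2*k)) * (ENNReal.ofReal ‖f x‖ * w x)) := by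
    intro x hx
    have hreal : ‖F x‖ ≤ (A / γ n) * (|Real.sin x| ^ (2*k) * (‖f x‖ * |Real.sin x| ^ (-k))) := by
      have hFnorm : ‖F x‖ = ‖f x‖ * ‖E n (-(Complex.I * x))‖ * |Real.sin x| ^ (2*k) := by
        rw [hF]
        simp only [norm_mul, Complex.norm_real]
        rw [Real.norm_of_nonneg (Real.rpow_nonneg (abs_nonneg _) _)]
      rw [hFnorm]
      rcases eq_or_ne (Real.sin x) 0 with hs | hs
      · have : |Real.sin x| ^ (2*k) = 0 := by
          rw [hs, abs_zero, Real.zero_rpow (by positivity : (2:ℝ)*k ≠ 0)]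
        rw [this, mul_zero]
        have h2 : (0:ℝ) ≤ ‖f x‖ * |Real.sin x| ^ (-k) :=
          mul_nonneg (norm_nonneg _) (Real.rpow_nonneg (abs_nonneg _) _)
        positivity
      · have hxneg : -x ∈ Set.Icc (-Real.pi) Real.pi := ⟨by linarith [hx.2], by linarith [hx.1]⟩
        have hb := hbound (-x) hxneg n
        have hcast : Complex.I * ((-x : ℝ) : ℂ) = -(Complex.I * x) := by push_cast; ring
        rw [hcast, Real.sin_neg, abs_neg] at hb
        have hsp : (0:ℝ) < |Real.sin x| ^ k := Real.rpow_pos_of_pos (abs_pos.2 hs) k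
        have hEb : ‖E n (-(Complex.I * x))‖ ≤ (A / γ n) * |Real.sin x| ^ (-k) := by
          rw [Real.rpow_neg (abs_nonneg _)]
          have heq : (A / γ n) * (|Real.sin x| ^ k)⁻¹ = A / (γ n * |Real.sin x| ^ k) := by
            field_simp
          rw [heq, le_div_iff₀ (by positivity)]
          calc ‖E n (-(Complex.I * x))‖ * (γ n * |Real.sin x| ^ k)
              = γ n * |Real.sin x| ^ k * ‖E n (-(Complex.I * x))‖ := by ring
            _ ≤ A := hb
        calc ‖f x‖ * ‖E n (-(Complex.I * x))‖ * |Real.sin x| ^ (2*k)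
            ≤ ‖f x‖ * ((A / γ n) * |Real.sin x| ^ (-k)) * |Real.sin x| ^ (2*k) := by
              refine mul_le_mul_of_nonneg_right (mul_le_mul_of_nonneg_left hEb (norm_nonneg _))
                (Real.rpow_nonneg (abs_nonneg _) _)
          _ = (A / γ n) * (|Real.sin x| ^ (2*k) * (‖f x‖ * |Real.sin x| ^ (-k))) := by ring
    calc ENNReal.ofReal ‖F x‖
        ≤ ENNReal.ofReal ((A / γ n) * (|Real.sin x| ^ (2*k) * (‖f x‖ * |Real.sin x| ^ (-k)))) :=
          ENNReal.ofReal_le_ofReal hreal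
      _ = ENNReal.ofReal (A / γ n) *
          (ENNReal.ofReal (|Real.sin x| ^ (2*k)) * (ENNReal.ofReal ‖f x‖ * w x)) := by
          rw [ENNReal.ofReal_mul (div_nonneg hA hγ.le),
            ENNReal.ofReal_mul (Real.rpow_nonneg (abs_nonneg _) _),
            ENNReal.ofReal_mul (norm_nonneg _)]
  -- final assembly
  have hab : -Real.pi ≤ Real.pi := by linarith
  rw [intervalIntegral.integral_of_le hab]
  have hmain : (∫⁻ x in Set.Ioc (-Real.pi) Real.pi, ENNReal.ofReal ‖F x‖ ∂volume)
      ≤ ENNReal.ofReal (A / γ n) * (Np * B) := by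
    calc ∫⁻ x in Set.Ioc (-Real.pi) Real.pi, ENNReal.ofReal ‖F x‖ ∂volume
        ≤ ∫⁻ x in Set.Icc (-Real.pi) Real.pi, ENNReal.ofReal ‖F x‖ ∂volume :=
          MeasureTheory.lintegral_mono' (MeasureTheory.Measure.restrict_mono
            Set.Ioc_subset_Icc_self le_rfl) le_rfl
      _ ≤ ∫⁻ x in Set.Icc (-Real.pi) Real.pi, ENNReal.ofReal (A / γ n) *
            (ENNReal.ofReal (|Real.sin x| ^ (2*k)) * (ENNReal.ofReal ‖f x‖ * w x)) ∂volume :=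
          MeasureTheory.lintegral_mono_ae ((MeasureTheory.ae_restrict_iff' measurableSet_Icc).2
            (MeasureTheory.ae_of_all _ hptwise))
      _ = ENNReal.ofReal (A / γ n) * ∫⁻ x in Set.Icc (-Real.pi) Real.pi,
            ENNReal.ofReal (|Real.sin x| ^ (2*k)) * (ENNReal.ofReal ‖f x‖ * w x) ∂volume :=
          MeasureTheory.lintegral_const_mul' _ _ ENNReal.ofReal_ne_top
      _ = ENNReal.ofReal (A / γ n) * ∫⁻ x, ENNReal.ofReal ‖f x‖ * w x ∂μ := by
          rw [hwd (fun x => ENNReal.ofReal ‖f x‖ * w x)]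
      _ ≤ ENNReal.ofReal (A / γ n) * (Np * B) := by
          refine mul_le_mul_right ?_ _
          have hf_meas : AEMeasurable (fun x => ENNReal.ofReal ‖f x‖) μ := by
            have hfe : (fun x => ENNReal.ofReal ‖f x‖) = fun x : ℝ => ‖f x‖ₑ := by
              funext x; exact ofReal_norm _
            rw [hfe]; exact hf.1.enorm
          have holder := ENNReal.lintegral_mul_le_Lp_mul_Lq μ hpq hf_meas hw_meas.aemeasurable
          simp only [Pi.mul_apply] at holder
          refine le_trans holder ?_
          have hNp_eq : (∫⁻ x, ENNReal.ofReal ‖f x‖ ^ p ∂μ) ^ (1/p) = Np := by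
            rw [hNp, MeasureTheory.eLpNorm_eq_lintegral_rpow_enorm_toReal
              (ne_of_gt (ENNReal.ofReal_pos.2 hp_pos)) ENNReal.ofReal_ne_top,
              ENNReal.toReal_ofReal hp_pos.le]
            simp_rw [ofReal_norm]
          rw [hNp_eq, hB]
  have hfin : ENNReal.ofReal (A / γ n) * (Np * B) ≠ ⊤ :=
    ENNReal.mul_ne_top ENNReal.ofReal_ne_top (ENNReal.mul_ne_top hNp_lt.ne hB_lt.ne)
  have hnorm_eq : ‖((γ n ^ 2 : ℝ) : ℂ) * ∫ x in Set.Ioc (-Real.pi) Real.pi, F x ∂volume‖ / γ n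
      = γ n * ‖∫ x in Set.Ioc (-Real.pi) Real.pi, F x ∂volume‖ := by
    rw [norm_mul, Complex.norm_real, Real.norm_of_nonneg (by positivity : (0:ℝ) ≤ γ n ^ 2)]
    field_simp
  calc ‖((γ n ^ 2 : ℝ) : ℂ) * ∫ x in Set.Ioc (-Real.pi) Real.pi, F x ∂volume‖ / γ n
      = γ n * ‖∫ x in Set.Ioc (-Real.pi) Real.pi, F x ∂volume‖ := hnorm_eq
    _ ≤ γ n * (∫⁻ x in Set.Ioc (-Real.pi) Real.pi, ENNReal.ofReal ‖F x‖ ∂volume).toReal :=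
        mul_le_mul_of_nonneg_left (MeasureTheory.norm_integral_le_lintegral_norm _) hγ.le
    _ ≤ γ n * (ENNReal.ofReal (A / γ n) * (Np * B)).toReal :=
        mul_le_mul_of_nonneg_left (ENNReal.toReal_mono hfin hmain) hγ.le
    _ = A * B.toReal * Np.toReal := by
        rw [ENNReal.toReal_mul, ENNReal.toReal_mul, ENNReal.toReal_ofReal (div_nonneg hA hγ.le)]
        field_simp
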